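/- Let a, b, c, d be four distinct letters. For all r, s ∈ ℕ, the Wichmann word W(r, s) = a b^r ⋄^r (a ⋄^{2r})^r b (⋄^{4r+2} c)^s (⋄^{2r+1} d)^{r+1} b^r over the alphabet {a, b, c, d} is unbordered. -/
import Mathlib


/-- The domain of a partial word (a list over `Option A`, where `none` is the hole):
the set of positions carrying a letter. -/
def PartialWord.domain {A : Type*} (w : List (Option A)) : Finset ℕ :=
  (Finset.range w.length).filter fun i => (w.getD i none).isSome

/-- Two partial words are compatible if they have the same length and agree on the
intersection of their domains. -/
def PartialWord.Compatible {A : Type*} (w v : List (Option A)) : Prop :=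
  w.length = v.length ∧
    ∀ i ∈ PartialWord.domain w ∩ PartialWord.domain v, w.getD i none = v.getD i none

/-- A partial word is unbordered if no nonempty proper prefix is compatible with a
suffix of the same length. -/
def PartialWord.Unbordered {A : Type*} (w : List (Option A)) : Prop :=
  ∀ x y : List (Option A), x <+: w → y <:+ w → x ≠ [] → x.length < w.length →
    x.length = y.length → ¬ PartialWord.Compatible x y

/-- The number of holes of a partial word. -/
def PartialWord.holes {A : Type*} (w : List (Option A)) : ℕ :=
  w.countP fun x => x.isNone

/-- `u` repeated `t` times. -/
def listPow {α : Type*} (u : List α) (t : ℕ) : List α := (List.replicate t u).flatten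

/-- A complete sparse ruler of length `n`. -/
def IsCompleteRuler (n : ℕ) (R : Finset ℕ) : Prop :=
  (∀ x ∈ R, x ≤ n) ∧ 0 ∈ R ∧ n ∈ R ∧ ∀ d ≤ n, ∃ r ∈ R, ∃ s ∈ R, r = s + d

/-- Minimum number of marks of a complete sparse ruler of length `n`. -/
noncomputable def M1 (n : ℕ) : ℕ :=
  sInf {k | ∃ R : Finset ℕ, IsCompleteRuler n R ∧ R.card = k}

/-- Maximum number of holes an unbordered partial word of length `n` over an alphabet
of size `k` can have. -/
noncomputable def HB (k n : ℕ) : ℕ :=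
  sSup {h | ∃ w : List (Option (Fin k)),
    w.length = n ∧ PartialWord.Unbordered w ∧ PartialWord.holes w = h}

/-- The ruler (set of partial sums) given by a difference representation. -/
def rulerOfDiffs (D : List ℕ) : Finset ℕ :=
  ((List.range (D.length + 1)).map fun t => (D.take t).sum).toFinset

/-- The difference representation of the extended Wichmann ruler `w₁(r,s,i,j)`. -/
def wichmannDiffs (r s i j : ℕ) : List ℕ :=
  List.replicate r 1 ++ [r + 1] ++ List.replicate r (2 * r + 1) ++
    List.replicate s (4 * r + 3) ++ List.replicate (r + 1) (2 * r + 2) ++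
    List.replicate r 1 ++ List.replicate i (r + 1) ++ [j]

/-- A complete two-dimensional sparse ruler: an `(n,m)`-ruler. -/
def IsRuler2 (n m : ℕ) (R : Finset (ℕ × ℕ)) : Prop :=
  (∀ p ∈ R, p.1 < n ∧ p.2 < m) ∧
    ∀ x y : ℤ, |x| ≤ (n : ℤ) - 1 → |y| ≤ (m : ℤ) - 1 →
      ∃ p ∈ R, ∃ q ∈ R, (p.1 : ℤ) - (q.1 : ℤ) = x ∧ (p.2 : ℤ) - (q.2 : ℤ) = y

/-- Minimum number of marks of an `(n,m)`-ruler. -/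
noncomputable def M2 (n m : ℕ) : ℕ :=
  sInf {k | ∃ R : Finset (ℕ × ℕ), IsRuler2 n m R ∧ R.card = k}

/-- The domain of an `n` by `m` two-dimensional partial word. -/
def domain2 {A : Type*} (n m : ℕ) (w : ℕ × ℕ → Option A) : Finset (ℕ × ℕ) :=
  (Finset.range n ×ˢ Finset.range m).filter fun p => (w p).isSome

/-- An `n` by `m` two-dimensional partial word is unbordered if its domain is an
`(n,m)`-ruler and every nonzero measurable vector can be measured between two
positions carrying distinct letters. -/
def Unbordered2 {A : Type*} (n m : ℕ) (w : ℕ × ℕ → Option A) : Prop :=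
  IsRuler2 n m (domain2 n m w) ∧
    ∀ x y : ℤ, |x| ≤ (n : ℤ) - 1 → |y| ≤ (m : ℤ) - 1 → ¬(x = 0 ∧ y = 0) →
      ∃ p ∈ domain2 n m w, ∃ q ∈ domain2 n m w,
        (p.1 : ℤ) - (q.1 : ℤ) = x ∧ (p.2 : ℤ) - (q.2 : ℤ) = y ∧ w p ≠ w q

/-- Number of holes of an `n` by `m` two-dimensional partial word. -/
def holes2 {A : Type*} (n m : ℕ) (w : ℕ × ℕ → Option A) : ℕ :=
  n * m - (domain2 n m w).card

/-- Maximum number of holes an unbordered `n` by `m` two-dimensional partial word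
over an alphabet of size `k` can have. -/
noncomputable def HB2 (k n m : ℕ) : ℕ :=
  sSup {h | ∃ w : ℕ × ℕ → Option (Fin k), Unbordered2 n m w ∧ holes2 n m w = h}

namespace Wich

variable {A : Type*}

lemma lp_len (u : List (Option A)) (t : ℕ) : (listPow u t).length = t * u.length := by
  induction t with
  | zero => simp [listPow]
  | succ t ih =>
    rw [listPow, List.replicate_succ, List.flatten_cons, List.length_append]
    rw [listPow] at ih; rw [ih]; ring

lemma lp_getD (u : List (Option A)) (L0 : ℕ) (hL : u.length = L0) :
    ∀ t q j : ℕ, q < t → j < L0 →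
      (listPow u t).getD (q * L0 + j) none = u.getD j none := by
  intro t
  induction t with
  | zero => intro q j hq hj; omega
  | succ t ih =>
    intro q j hq hj
    rw [listPow, List.replicate_succ, List.flatten_cons]
    rcases Nat.eq_zero_or_pos q with rfl | h0
    · rw [zero_mul, zero_add]
      exact List.getD_append _ _ _ _ (by omega)
    · obtain ⟨q', rfl⟩ : ∃ q', q = q' + 1 := ⟨q - 1, by omega⟩
      have hmul : (q' + 1) * L0 = q' * L0 + L0 := by ring
      rw [List.getD_append_right _ _ _ _ (by rw [hL]; omega)]
      have hidx : (q' + 1) * L0 + j - u.length = q' * L0 + j := by rw [hL]; omega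
      rw [hidx]
      exact ih q' j (by omega) hj

lemma stripR {l1 l2 : List (Option A)} {n k : ℕ} (hl : l1.length = k) (h : n < k) :
    (l1 ++ l2).getD n none = l1.getD n none := List.getD_append _ _ _ _ (by omega)

lemma stripL {l1 l2 : List (Option A)} {n k : ℕ} (hl : l1.length = k) (h : k ≤ n) :
    (l1 ++ l2).getD n none = l2.getD (n - k) none := by
  subst hl; exact List.getD_append_right _ _ _ _ h

lemma getD_take (l : List (Option A)) (n i : ℕ) (h : i < n) :
    (l.take n).getD i none = l.getD i none := by
  rw [List.getD_eq_getElem?_getD, List.getD_eq_getElem?_getD, List.getElem?_take, if_pos h]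

lemma getD_drop (l : List (Option A)) (n i : ℕ) :
    (l.drop n).getD i none = l.getD (n + i) none := by
  rw [List.getD_eq_getElem?_getD, List.getD_eq_getElem?_getD, List.getElem?_drop]

def WW (a b c d : A) (r s : ℕ) : List (Option A) :=
  [some a] ++ List.replicate r (some b) ++ List.replicate r none ++
    listPow ([some a] ++ List.replicate (2 * r) none) r ++ [some b] ++
    listPow (List.replicate (4 * r + 2) none ++ [some c]) s ++
    listPow (List.replicate (2 * r + 1) none ++ [some d]) (r + 1) ++
    List.replicate r (some b)

lemma WW_len (a b c d : A) (r s : ℕ) : (WW a b c d r s).length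
    = (r+1)*(2*r+1) + s*(4*r+3) + (r+1)*(2*r+2) + r + 1 := by
  simp only [WW, List.length_append, List.length_replicate, List.length_singleton, lp_len,
    List.length_cons, List.length_nil]
  ring

-- cumulative length facts
lemma len3 (a b : A) (r : ℕ) :
    ([some a] ++ List.replicate r (some b) ++ List.replicate r (none : Option A)).length
    = 2*r+1 := by
  simp only [List.length_append, List.length_replicate, List.length_singleton]; ring

lemma len4 (a b : A) (r : ℕ) : ([some a] ++ List.replicate r (some b) ++ List.replicate r none ++
    listPow ([some a] ++ List.replicate (2 * r) none) r).length = (r+1)*(2*r+1) := by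
  simp only [List.length_append, List.length_replicate, List.length_singleton, lp_len,
    List.length_cons, List.length_nil]
  ring

lemma len5 (a b : A) (r : ℕ) : ([some a] ++ List.replicate r (some b) ++ List.replicate r none ++
    listPow ([some a] ++ List.replicate (2 * r) none) r ++ [some b]).length
    = (r+1)*(2*r+1) + 1 := by
  simp only [List.length_append, List.length_replicate, List.length_singleton, lp_len,
    List.length_cons, List.length_nil]
  ring

lemma len6 (a b c : A) (r s : ℕ) :
    ([some a] ++ List.replicate r (some b) ++ List.replicate r none ++
    listPow ([some a] ++ List.replicate (2 * r) none) r ++ [some b] ++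
    listPow (List.replicate (4 * r + 2) none ++ [some c]) s).length
    = (r+1)*(2*r+1) + s*(4*r+3) + 1 := by
  simp only [List.length_append, List.length_replicate, List.length_singleton, lp_len,
    List.length_cons, List.length_nil]
  ring

lemma len7 (a b c d : A) (r s : ℕ) :
    ([some a] ++ List.replicate r (some b) ++ List.replicate r none ++
    listPow ([some a] ++ List.replicate (2 * r) none) r ++ [some b] ++
    listPow (List.replicate (4 * r + 2) none ++ [some c]) s ++
    listPow (List.replicate (2 * r + 1) none ++ [some d]) (r + 1)).length
    = (r+1)*(2*r+1) + s*(4*r+3) + (r+1)*(2*r+2) + 1 := by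
  simp only [List.length_append, List.length_replicate, List.length_singleton, lp_len,
    List.length_cons, List.length_nil]
  ring

section marks
variable (a b c d : A) (r s : ℕ)

-- linking facts for omega
private lemma lk1 (r : ℕ) : (r+1)*(2*r+1) = 2*(r*r) + 3*r + 1 := by ring
private lemma lk2 (r : ℕ) : (r+1)*(2*r+2) = 2*(r*r) + 4*r + 2 := by ring
private lemma lk3 (r s : ℕ) : s*(4*r+3) = 4*(s*r) + 3*s := by ring
private lemma lk4 (r : ℕ) : r*(2*r+1) = 2*(r*r) + r := by ring

lemma gzero : (WW a b c d r s).getD 0 none = some a := by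
  unfold WW
  have h1 := lk1 r; have h2 := lk2 r; have h3 := lk3 r s
  rw [stripR (len7 a b c d r s) (by omega), stripR (len6 a b c r s) (by omega),
    stripR (len5 a b r) (by omega), stripR (len4 a b r) (by omega),
    stripR (len3 a b r) (by omega),
    stripR (l2 := List.replicate r (none : Option A)) (k := 1 + r)
      (by simp only [List.length_append, List.length_replicate, List.length_singleton])
      (by omega),
    stripR (l2 := List.replicate r (some b)) (k := 1) (by simp) (by omega)]
  rfl

lemma gb1 (j : ℕ) (h1 : 1 ≤ j) (h2 : j ≤ r) : (WW a b c d r s).getD j none = some b := by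
  unfold WW
  have e1 := lk1 r; have e2 := lk2 r; have e3 := lk3 r s
  rw [stripR (len7 a b c d r s) (by omega), stripR (len6 a b c r s) (by omega),
    stripR (len5 a b r) (by omega), stripR (len4 a b r) (by omega),
    stripR (len3 a b r) (by omega),
    stripR (l2 := List.replicate r (none : Option A)) (k := 1 + r)
      (by simp only [List.length_append, List.length_replicate, List.length_singleton])
      (by omega),
    stripL (l2 := List.replicate r (some b)) (k := 1) (by simp) (by omega)]
  rw [List.getD_eq_getElem?_getD, List.getElem?_replicate]
  have : j - 1 < r := by omega
  simp [this]

lemma ga (m : ℕ) (hm : m ≤ r) : (WW a b c d r s).getD (m*(2*r+1)) none = some a := by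
  rcases Nat.eq_zero_or_pos m with rfl | h0
  · rw [zero_mul]; exact gzero a b c d r s
  unfold WW
  have e1 := lk1 r; have e2 := lk2 r; have e3 := lk3 r s; have e4 := lk4 r
  have hmul := Nat.mul_le_mul_right (2*r+1) hm
  have hmul1 := Nat.mul_le_mul_right (2*r+1) h0
  rw [stripR (len7 a b c d r s) (by omega), stripR (len6 a b c r s) (by omega),
    stripR (len5 a b r) (by omega), stripR (len4 a b r) (by omega),
    stripL (len3 a b r) (by omega)]
  have hidx : m*(2*r+1) - (2*r+1) = (m-1)*(2*r+1) + 0 := by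
    zify [h0, show 2*r+1 ≤ m*(2*r+1) from by omega]
    ring
  rw [hidx, lp_getD _ (2*r+1)
    (by simp only [List.length_append, List.length_replicate, List.length_singleton]; try omega)
    r (m-1) 0 (by omega) (by omega)]
  rfl

lemma gB : (WW a b c d r s).getD ((r+1)*(2*r+1)) none = some b := by
  unfold WW
  have e1 := lk1 r; have e2 := lk2 r; have e3 := lk3 r s
  rw [stripR (len7 a b c d r s) (by omega), stripR (len6 a b c r s) (by omega),
    stripR (len5 a b r) (by omega), stripL (len4 a b r) (by omega)]
  simp

lemma gc (i : ℕ) (h1 : 1 ≤ i) (h2 : i ≤ s) :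
    (WW a b c d r s).getD ((r+1)*(2*r+1) + i*(4*r+3)) none = some c := by
  unfold WW
  have e1 := lk1 r; have e2 := lk2 r; have e3 := lk3 r s
  have hmul := Nat.mul_le_mul_right (4*r+3) h2
  have hmul1 := Nat.mul_le_mul_right (4*r+3) h1
  rw [stripR (len7 a b c d r s) (by omega), stripR (len6 a b c r s) (by omega),
    stripL (len5 a b r) (by omega)]
  have hidx : (r+1)*(2*r+1) + i*(4*r+3) - ((r+1)*(2*r+1) + 1)
      = (i-1)*(4*r+3) + (4*r+2) := by
    zify [h1, show (r+1)*(2*r+1) + 1 ≤ (r+1)*(2*r+1) + i*(4*r+3) from by omega]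
    ring
  rw [hidx, lp_getD _ (4*r+3)
    (by simp only [List.length_append, List.length_replicate, List.length_singleton]; try omega)
    s (i-1) (4*r+2) (by omega) (by omega)]
  rw [stripL (l2 := [some c]) (k := 4*r+2) (by simp) (by omega)]
  simp

lemma gd (k : ℕ) (h1 : 1 ≤ k) (h2 : k ≤ r+1) :
    (WW a b c d r s).getD ((r+1)*(2*r+1) + s*(4*r+3) + k*(2*r+2)) none = some d := by
  unfold WW
  have e1 := lk1 r; have e2 := lk2 r; have e3 := lk3 r s
  have hmul := Nat.mul_le_mul_right (2*r+2) h2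
  have hmul1 := Nat.mul_le_mul_right (2*r+2) h1
  rw [stripR (len7 a b c d r s) (by omega), stripL (len6 a b c r s) (by omega)]
  have hidx : (r+1)*(2*r+1) + s*(4*r+3) + k*(2*r+2) - ((r+1)*(2*r+1) + s*(4*r+3) + 1)
      = (k-1)*(2*r+2) + (2*r+1) := by
    zify [h1, show (r+1)*(2*r+1) + s*(4*r+3) + 1
        ≤ (r+1)*(2*r+1) + s*(4*r+3) + k*(2*r+2) from by omega]
    ring
  rw [hidx, lp_getD _ (2*r+2)
    (by simp only [List.length_append, List.length_replicate, List.length_singleton]; try omega)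
    (r+1) (k-1) (2*r+1) (by omega) (by omega)]
  rw [stripL (l2 := [some d]) (k := 2*r+1) (by simp) (by omega)]
  simp

lemma gb2 (j : ℕ) (h1 : 1 ≤ j) (h2 : j ≤ r) :
    (WW a b c d r s).getD ((r+1)*(2*r+1) + s*(4*r+3) + (r+1)*(2*r+2) + j) none = some b := by
  unfold WW
  rw [stripL (len7 a b c d r s) (by omega)]
  have hidx : (r+1)*(2*r+1) + s*(4*r+3) + (r+1)*(2*r+2) + j
      - ((r+1)*(2*r+1) + s*(4*r+3) + (r+1)*(2*r+2) + 1) = j - 1 := by omega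
  rw [hidx, List.getD_eq_getElem?_getD, List.getElem?_replicate]
  have : j - 1 < r := by omega
  simp [this]

-- packaged letter lemmas
lemma gLAB (m : ℕ) (hm : m ≤ r+1) :
    ∃ γ, (WW a b c d r s).getD (m*(2*r+1)) none = some γ ∧ (γ = a ∨ γ = b) := by
  rcases Nat.lt_or_ge m (r+1) with h | h
  · exact ⟨a, ga a b c d r s m (by omega), Or.inl rfl⟩
  · obtain rfl : m = r+1 := by omega
    exact ⟨b, gB a b c d r s, Or.inr rfl⟩

lemma gCB (i : ℕ) (hi : i ≤ s) :
    ∃ γ, (WW a b c d r s).getD ((r+1)*(2*r+1) + i*(4*r+3)) none = some γ ∧ (γ = b ∨ γ = c) := by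
  rcases Nat.eq_zero_or_pos i with rfl | h0
  · refine ⟨b, ?_, Or.inl rfl⟩
    rw [show (r+1)*(2*r+1) + 0*(4*r+3) = (r+1)*(2*r+1) from by ring]
    exact gB a b c d r s
  · exact ⟨c, gc a b c d r s i h0 hi, Or.inr rfl⟩

lemma gDB2 (j : ℕ) (hj : j ≤ r) :
    ∃ γ, (WW a b c d r s).getD ((r+1)*(2*r+1) + s*(4*r+3) + (r+1)*(2*r+2) + j) none = some γ ∧
      (γ = b ∨ γ = d) := by
  rcases Nat.eq_zero_or_pos j with rfl | h0
  · refine ⟨d, ?_, Or.inr rfl⟩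
    rw [show (r+1)*(2*r+1) + s*(4*r+3) + (r+1)*(2*r+2) + 0
        = (r+1)*(2*r+1) + s*(4*r+3) + (r+1)*(2*r+2) from by ring]
    exact gd a b c d r s (r+1) (by omega) (by omega)
  · exact ⟨b, gb2 a b c d r s j h0 hj, Or.inl rfl⟩

lemma gAB1 (p : ℕ) (hp : p ≤ r) :
    ∃ γ, (WW a b c d r s).getD p none = some γ ∧ (γ = a ∨ γ = b) := by
  rcases Nat.eq_zero_or_pos p with rfl | h0
  · exact ⟨a, gzero a b c d r s, Or.inl rfl⟩
  · exact ⟨b, gb1 a b c d r s p h0 hp, Or.inr rfl⟩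

end marks
lemma core (a b c d : A) (hab : a ≠ b) (hac : a ≠ c) (had : a ≠ d) (hbc : b ≠ c)
    (hbd : b ≠ d) (hcd : c ≠ d) (r s t : ℕ) (ht1 : 1 ≤ t)
    (ht2 : t ≤ (r+1)*(2*r+1) + s*(4*r+3) + (r+1)*(2*r+2) + r) :
    ∃ p β γ, p + t ≤ (r+1)*(2*r+1) + s*(4*r+3) + (r+1)*(2*r+2) + r ∧
      (WW a b c d r s).getD p none = some β ∧
      (WW a b c d r s).getD (p + t) none = some γ ∧ β ≠ γ := by
  have e1 : (r+1)*(2*r+1) = 2*(r*r) + 3*r + 1 := by ring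
  have e2 : (r+1)*(2*r+2) = 2*(r*r) + 4*r + 2 := by ring
  have e3 : s*(4*r+3) = 4*(s*r) + 3*s := by ring
  have e4 : r*(2*r+1) = 2*(r*r) + r := by ring
  by_cases hR0 : t ≤ r
  · exact ⟨0, a, b, by omega, gzero a b c d r s,
      by rw [zero_add]; exact gb1 a b c d r s t ht1 hR0, hab⟩
  by_cases hA : t ≤ (r+1)*(2*r+1)
  · -- region A
    obtain ⟨m, ρ, hmρ, hρ⟩ : ∃ m ρ, t = m*(2*r+1) + ρ ∧ ρ < 2*r+1 :=
      ⟨t/(2*r+1), t%(2*r+1), by rw [mul_comm]; exact (Nat.div_add_mod t (2*r+1)).symm,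
        Nat.mod_lt _ (by omega)⟩
    have hm : m ≤ r+1 := by
      by_contra hcon
      have h2' := Nat.mul_le_mul_right (2*r+1) (show r+2 ≤ m from by omega)
      have hl : (r+2)*(2*r+1) = (r+1)*(2*r+1) + (2*r+1) := by ring
      omega
    subst hmρ
    by_cases hρ0 : ρ = 0
    · subst hρ0
      have hm1 : 1 ≤ m := by rcases Nat.eq_zero_or_pos m with rfl | h <;> omega
      rcases Nat.lt_or_ge m (r+1) with hmr | hmr
      · have key : (r+1-m)*(2*r+1) + (m*(2*r+1) + 0) = (r+1)*(2*r+1) := by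
          zify [show m ≤ r+1 from by omega]; ring
        refine ⟨(r+1-m)*(2*r+1), a, b, by omega, ga a b c d r s (r+1-m) (by omega), ?_, hab⟩
        rw [key]; exact gB a b c d r s
      · obtain rfl : m = r+1 := by omega
        refine ⟨0, a, b, by omega, gzero a b c d r s, ?_, hab⟩
        rw [show 0 + ((r+1)*(2*r+1) + 0) = (r+1)*(2*r+1) from by ring]
        exact gB a b c d r s
    · have hmr : m ≤ r := by
        rcases Nat.lt_or_ge m (r+1) with h | h
        · omega
        · obtain rfl : m = r+1 := by omega
          omega
      by_cases hρr : r+1 ≤ ρ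
      · by_cases hc : m+1 ≤ r
        · -- A2a
          have key : (2*r+1-ρ) + (m*(2*r+1) + ρ) = (m+1)*(2*r+1) := by
            zify [show ρ ≤ 2*r+1 from by omega]; ring
          have hb' := Nat.mul_le_mul_right (2*r+1) (show m+1 ≤ r from hc)
          refine ⟨2*r+1-ρ, b, a, by omega, gb1 a b c d r s _ (by omega) (by omega), ?_,
            hab.symm⟩
          rw [key]; exact ga a b c d r s (m+1) (by omega)
        · -- A2b (m = r)
          have hm' : m = r := by omega
          have key : ((r+1)*(2*r+1) + s*(4*r+3) + 1*(2*r+2)) + (m*(2*r+1) + ρ)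
              = (r+1)*(2*r+1) + s*(4*r+3) + (r+1)*(2*r+2) + (ρ - r) := by
            rw [hm']; zify [show r ≤ ρ from by omega]; ring
          refine ⟨(r+1)*(2*r+1) + s*(4*r+3) + 1*(2*r+2), d, b, by omega,
            gd a b c d r s 1 (by omega) (by omega), ?_, hbd.symm⟩
          rw [key]; exact gb2 a b c d r s (ρ - r) (by omega) (by omega)
      · -- 1 ≤ ρ ≤ r
        have hm1 : 1 ≤ m := by rcases Nat.eq_zero_or_pos m with rfl | h <;> omega
        by_cases hc1 : m < ρ
        · -- Ac1
          have hmul := Nat.mul_le_mul_right (2*r+2) (show r+1-m ≤ r+1 from by omega)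
          have key : ((r+1)*(2*r+1) + s*(4*r+3) + (r+1-m)*(2*r+2)) + (m*(2*r+1) + ρ)
              = (r+1)*(2*r+1) + s*(4*r+3) + (r+1)*(2*r+2) + (ρ - m) := by
            zify [show m ≤ r+1 from by omega, show m ≤ ρ from by omega]; ring
          refine ⟨(r+1)*(2*r+1) + s*(4*r+3) + (r+1-m)*(2*r+2), d, b, by omega,
            gd a b c d r s (r+1-m) (by omega) (by omega), ?_, hbd.symm⟩
          rw [key]; exact gb2 a b c d r s (ρ-m) (by omega) (by omega)
        by_cases hc2 : ρ = m
        · -- Ac2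
          subst hc2
          obtain ⟨γ, hγ, hor⟩ := gCB a b c d r s s le_rfl
          have hmul := Nat.mul_le_mul_right (2*r+2) (show ρ ≤ r+1 from by omega)
          have key : ((r+1)*(2*r+1) + s*(4*r+3)) + (ρ*(2*r+1) + ρ)
              = (r+1)*(2*r+1) + s*(4*r+3) + ρ*(2*r+2) := by ring
          refine ⟨(r+1)*(2*r+1) + s*(4*r+3), γ, d, by omega, hγ, ?_,
            by rcases hor with rfl | rfl; exacts [hbd, hcd]⟩
          rw [key]; exact gd a b c d r s ρ (by omega) (by omega)
        by_cases hc3 : m - ρ + 1 ≤ s ∧ m - ρ < ρ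
        · -- Ac3
          have hmul := Nat.mul_le_mul_right (2*r+2) (show ρ-(m-ρ) ≤ r+1 from by omega)
          have key : ((r+1)*(2*r+1) + (s-(m-ρ))*(4*r+3)) + (m*(2*r+1) + ρ)
              = (r+1)*(2*r+1) + s*(4*r+3) + (ρ-(m-ρ))*(2*r+2) := by
            zify [show m - ρ ≤ s from by omega, show m - ρ ≤ ρ from by omega,
              show ρ ≤ m from by omega]; ring
          refine ⟨(r+1)*(2*r+1) + (s-(m-ρ))*(4*r+3), c, d, by omega,
            gc a b c d r s (s-(m-ρ)) (by omega) (by omega), ?_, hcd⟩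
          rw [key]; exact gd a b c d r s (ρ-(m-ρ)) (by omega) (by omega)
        by_cases hc4 : ρ ≤ s
        · -- Ac4a
          obtain ⟨γ, hγ, hor⟩ := gLAB a b c d r s (r+1+2*ρ-m) (by omega)
          have key : (r+1+2*ρ-m)*(2*r+1) + (m*(2*r+1) + ρ)
              = (r+1)*(2*r+1) + ρ*(4*r+3) := by
            zify [show m ≤ r+1+2*ρ from by omega]; ring
          have hmul := Nat.mul_le_mul_right (4*r+3) (show ρ ≤ s from hc4)
          refine ⟨(r+1+2*ρ-m)*(2*r+1), γ, c, by omega, hγ, ?_,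
            by rcases hor with rfl | rfl; exacts [hac, hbc]⟩
          rw [key]; exact gc a b c d r s ρ (by omega) hc4
        · -- Ac4b
          obtain ⟨γ, hγ, hor⟩ := gLAB a b c d r s (r+1+s+ρ-m) (by omega)
          have key : (r+1+s+ρ-m)*(2*r+1) + (m*(2*r+1) + ρ)
              = (r+1)*(2*r+1) + s*(4*r+3) + (ρ-s)*(2*r+2) := by
            zify [show m ≤ r+1+s+ρ from by omega, show s ≤ ρ from by omega]; ring
          have hmul := Nat.mul_le_mul_right (2*r+2) (show ρ - s ≤ r+1 from by omega)
          refine ⟨(r+1+s+ρ-m)*(2*r+1), γ, d, by omega, hγ, ?_,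
            by rcases hor with rfl | rfl; exacts [had, hbd]⟩
          rw [key]; exact gd a b c d r s (ρ-s) (by omega) (by omega)
  by_cases hC : t ≤ (r+1)*(2*r+1) + s*(4*r+3)
  · -- region C
    obtain ⟨z, hz⟩ : ∃ z, t = (r+1)*(2*r+1) + 1 + z := ⟨t - ((r+1)*(2*r+1)+1), by omega⟩
    obtain ⟨i0, z0, hz0, hz0'⟩ : ∃ i0 z0, z = i0*(4*r+3) + z0 ∧ z0 < 4*r+3 :=
      ⟨z/(4*r+3), z%(4*r+3), by rw [mul_comm]; exact (Nat.div_add_mod _ _).symm,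
        Nat.mod_lt _ (by omega)⟩
    have hi0 : i0+1 ≤ s := by
      by_contra hcon
      have := Nat.mul_le_mul_right (4*r+3) (show s ≤ i0 from by omega)
      omega
    obtain ⟨ε, hε1, hε2, hti⟩ : ∃ ε, 1 ≤ ε ∧ ε ≤ 4*r+3 ∧
        t = (r+1)*(2*r+1) + i0*(4*r+3) + ε := ⟨z0+1, by omega, by omega, by omega⟩
    subst hti
    clear hz hz0 hz0'
    by_cases hC1 : 3*r+3 ≤ ε
    · -- C1
      obtain ⟨γ, hγ, hor⟩ := gAB1 a b c d r s (4*r+3-ε) (by omega)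
      have key : (4*r+3-ε) + ((r+1)*(2*r+1) + i0*(4*r+3) + ε)
          = (r+1)*(2*r+1) + (i0+1)*(4*r+3) := by
        zify [show ε ≤ 4*r+3 from hε2]; ring
      have hmul := Nat.mul_le_mul_right (4*r+3) (show i0+1 ≤ s from hi0)
      refine ⟨4*r+3-ε, γ, c, by omega, hγ, ?_,
        by rcases hor with rfl | rfl; exacts [hac, hbc]⟩
      rw [key]; exact gc a b c d r s (i0+1) (by omega) hi0
    by_cases hC4 : r+1 ≤ ε ∧ ε ≤ 2*r+1
    · -- C4
      obtain ⟨γ, hγ, hor⟩ := gDB2 a b c d r s (ε-(r+1)) (by omega)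
      have hmul := Nat.mul_le_mul_right (4*r+3) (show s-i0 ≤ s from by omega)
      have key : ((r+1)*(2*r+1) + (s-i0)*(4*r+3)) + ((r+1)*(2*r+1) + i0*(4*r+3) + ε)
          = (r+1)*(2*r+1) + s*(4*r+3) + (r+1)*(2*r+2) + (ε-(r+1)) := by
        zify [show i0 ≤ s from by omega, show r+1 ≤ ε from hC4.1]; ring
      refine ⟨(r+1)*(2*r+1) + (s-i0)*(4*r+3), c, γ, by omega,
        gc a b c d r s (s-i0) (by omega) (by omega), ?_,
        by rcases hor with rfl | rfl; exacts [hbc.symm, hcd]⟩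
      rw [key]; exact hγ
    by_cases hC23 : 2*r+2 ≤ ε
    · by_cases hC3p : 2*ε ≤ 5*r+4
      · by_cases hC3a : i0 + ε ≤ s + (2*r+1)
        · -- C3a
          obtain ⟨γ, hγ, hor⟩ := gLAB a b c d r s (2*ε-(4*r+3)) (by omega)
          have key : (2*ε-(4*r+3))*(2*r+1) + ((r+1)*(2*r+1) + i0*(4*r+3) + ε)
              = (r+1)*(2*r+1) + (i0+ε-(2*r+1))*(4*r+3) := by
            zify [show 4*r+3 ≤ 2*ε from by omega, show 2*r+1 ≤ i0+ε from by omega]; ring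
          have hmul := Nat.mul_le_mul_right (4*r+3) (show i0+ε-(2*r+1) ≤ s from by omega)
          refine ⟨(2*ε-(4*r+3))*(2*r+1), γ, c, by omega, hγ, ?_,
            by rcases hor with rfl | rfl; exacts [hac, hbc]⟩
          rw [key]; exact gc a b c d r s _ (by omega) (by omega)
        · -- C3b
          have key : (s+ε-(i0+2*r+2))*(2*r+1) + ((r+1)*(2*r+1) + i0*(4*r+3) + ε)
              = (r+1)*(2*r+1) + s*(4*r+3) + (ε+i0-(s+2*r+1))*(2*r+2) := by
            zify [show i0+2*r+2 ≤ s+ε from by omega,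
              show s+2*r+1 ≤ ε+i0 from by omega]; ring
          have hmul := Nat.mul_le_mul_right (2*r+2)
            (show ε+i0-(s+2*r+1) ≤ r+1 from by omega)
          refine ⟨(s+ε-(i0+2*r+2))*(2*r+1), a, d, by omega,
            ga a b c d r s (s+ε-(i0+2*r+2)) (by omega), ?_, had⟩
          rw [key]; exact gd a b c d r s _ (by omega) (by omega)
      · by_cases hC2a : i0 + (3*r+3) ≤ s + ε
        · -- C2a
          obtain ⟨γ, hγ, hor⟩ := gCB a b c d r s (s+ε-(i0+3*r+3)) (by omega)
          have key : ((r+1)*(2*r+1) + (s+ε-(i0+3*r+3))*(4*r+3))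
                + ((r+1)*(2*r+1) + i0*(4*r+3) + ε)
              = (r+1)*(2*r+1) + s*(4*r+3) + (2*ε-(5*r+4))*(2*r+2) := by
            zify [show i0+3*r+3 ≤ s+ε from by omega, show 5*r+4 ≤ 2*ε from by omega]; ring
          have hmul := Nat.mul_le_mul_right (2*r+2) (show 2*ε-(5*r+4) ≤ r+1 from by omega)
          refine ⟨(r+1)*(2*r+1) + (s+ε-(i0+3*r+3))*(4*r+3), γ, d, by omega, hγ, ?_,
            by rcases hor with rfl | rfl; exacts [hbd, hcd]⟩
          rw [key]; exact gd a b c d r s _ (by omega) (by omega)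
        · -- C2b
          have key : (s+ε-(i0+2*r+2))*(2*r+1) + ((r+1)*(2*r+1) + i0*(4*r+3) + ε)
              = (r+1)*(2*r+1) + s*(4*r+3) + (ε+i0-(s+2*r+1))*(2*r+2) := by
            zify [show i0+2*r+2 ≤ s+ε from by omega,
              show s+2*r+1 ≤ ε+i0 from by omega]; ring
          have hmul := Nat.mul_le_mul_right (2*r+2)
            (show ε+i0-(s+2*r+1) ≤ r+1 from by omega)
          refine ⟨(s+ε-(i0+2*r+2))*(2*r+1), a, d, by omega,
            ga a b c d r s (s+ε-(i0+2*r+2)) (by omega), ?_, had⟩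
          rw [key]; exact gd a b c d r s _ (by omega) (by omega)
    · -- ε ≤ r
      have hεr : ε ≤ r := by omega
      by_cases hC5p : r+2 ≤ 2*ε
      · by_cases hC5a : i0 + (r+1) ≤ s + ε
        · -- C5a
          obtain ⟨γ, hγ, hor⟩ := gCB a b c d r s (s+ε-(i0+r+1)) (by omega)
          have key : ((r+1)*(2*r+1) + (s+ε-(i0+r+1))*(4*r+3))
                + ((r+1)*(2*r+1) + i0*(4*r+3) + ε)
              = (r+1)*(2*r+1) + s*(4*r+3) + (2*ε-(r+1))*(2*r+2) := by
            zify [show i0+r+1 ≤ s+ε from by omega, show r+1 ≤ 2*ε from by omega]; ring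
          have hmul := Nat.mul_le_mul_right (2*r+2) (show 2*ε-(r+1) ≤ r+1 from by omega)
          refine ⟨(r+1)*(2*r+1) + (s+ε-(i0+r+1))*(4*r+3), γ, d, by omega, hγ, ?_,
            by rcases hor with rfl | rfl; exacts [hbd, hcd]⟩
          rw [key]; exact gd a b c d r s _ (by omega) (by omega)
        · -- C5b
          have key : (s+ε-i0)*(2*r+1) + ((r+1)*(2*r+1) + i0*(4*r+3) + ε)
              = (r+1)*(2*r+1) + s*(4*r+3) + (ε+i0-s)*(2*r+2) := by
            zify [show i0 ≤ s+ε from by omega, show s ≤ ε+i0 from by omega]; ring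
          have hmul := Nat.mul_le_mul_right (2*r+2) (show ε+i0-s ≤ r+1 from by omega)
          refine ⟨(s+ε-i0)*(2*r+1), a, d, by omega,
            ga a b c d r s (s+ε-i0) (by omega), ?_, had⟩
          rw [key]; exact gd a b c d r s _ (by omega) (by omega)
      · by_cases hC6a : i0 + ε ≤ s
        · -- C6a
          obtain ⟨γ, hγ, hor⟩ := gLAB a b c d r s (2*ε) (by omega)
          have key : (2*ε)*(2*r+1) + ((r+1)*(2*r+1) + i0*(4*r+3) + ε)
              = (r+1)*(2*r+1) + (i0+ε)*(4*r+3) := by ring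
          have hmul := Nat.mul_le_mul_right (4*r+3) (show i0+ε ≤ s from hC6a)
          refine ⟨(2*ε)*(2*r+1), γ, c, by omega, hγ, ?_,
            by rcases hor with rfl | rfl; exacts [hac, hbc]⟩
          rw [key]; exact gc a b c d r s _ (by omega) hC6a
        · -- C6b
          have key : (s+ε-i0)*(2*r+1) + ((r+1)*(2*r+1) + i0*(4*r+3) + ε)
              = (r+1)*(2*r+1) + s*(4*r+3) + (ε+i0-s)*(2*r+2) := by
            zify [show i0 ≤ s+ε from by omega, show s ≤ ε+i0 from by omega]; ring
          have hmul := Nat.mul_le_mul_right (2*r+2) (show ε+i0-s ≤ r+1 from by omega)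
          refine ⟨(s+ε-i0)*(2*r+1), a, d, by omega,
            ga a b c d r s (s+ε-i0) (by omega), ?_, had⟩
          rw [key]; exact gd a b c d r s _ (by omega) (by omega)
  · -- region D
    obtain ⟨z, hz⟩ : ∃ z, t = (r+1)*(2*r+1) + s*(4*r+3) + z :=
      ⟨t - ((r+1)*(2*r+1) + s*(4*r+3)), by omega⟩
    obtain ⟨k, δ, hkδ, hδ⟩ : ∃ k δ, z = k*(2*r+2) + δ ∧ δ < 2*r+2 :=
      ⟨z/(2*r+2), z%(2*r+2), by rw [mul_comm]; exact (Nat.div_add_mod _ _).symm,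
        Nat.mod_lt _ (by omega)⟩
    have hk2 : k ≤ r+1 := by
      by_contra hcon
      have := Nat.mul_le_mul_right (2*r+2) (show r+2 ≤ k from by omega)
      have hl : (r+2)*(2*r+2) = (r+1)*(2*r+2) + (2*r+2) := by ring
      omega
    obtain rfl : t = (r+1)*(2*r+1) + s*(4*r+3) + k*(2*r+2) + δ := by omega
    clear hz hkδ
    have hkr : k = r+1 → δ ≤ r := by
      rintro rfl; omega
    by_cases hD0 : δ = 0
    · subst hD0
      have hk1 : 1 ≤ k := by rcases Nat.eq_zero_or_pos k with rfl | h <;> omega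
      refine ⟨0, a, d, by omega, gzero a b c d r s, ?_, had⟩
      rw [show 0 + ((r+1)*(2*r+1) + s*(4*r+3) + k*(2*r+2) + 0)
          = (r+1)*(2*r+1) + s*(4*r+3) + k*(2*r+2) from by ring]
      exact gd a b c d r s k hk1 hk2
    by_cases hD3 : r+2 ≤ δ
    · -- D3
      have hkr' : k ≤ r := by
        by_contra h; obtain rfl : k = r+1 := by omega
        have := hkr rfl; omega
      have key : (2*r+2-δ) + ((r+1)*(2*r+1) + s*(4*r+3) + k*(2*r+2) + δ)
          = (r+1)*(2*r+1) + s*(4*r+3) + (k+1)*(2*r+2) := by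
        zify [show δ ≤ 2*r+2 from by omega]; ring
      have hmul := Nat.mul_le_mul_right (2*r+2) (show k+1 ≤ r+1 from by omega)
      refine ⟨2*r+2-δ, b, d, by omega, gb1 a b c d r s _ (by omega) (by omega), ?_, hbd⟩
      rw [key]; exact gd a b c d r s (k+1) (by omega) (by omega)
    by_cases hD1 : k + δ ≤ r+1 ∧ δ ≤ r
    · -- D1
      have key : δ*(2*r+1) + ((r+1)*(2*r+1) + s*(4*r+3) + k*(2*r+2) + δ)
          = (r+1)*(2*r+1) + s*(4*r+3) + (k+δ)*(2*r+2) := by ring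
      have hmul := Nat.mul_le_mul_right (2*r+2) (show k+δ ≤ r+1 from hD1.1)
      refine ⟨δ*(2*r+1), a, d, by omega, ga a b c d r s δ hD1.2, ?_, had⟩
      rw [key]; exact gd a b c d r s (k+δ) (by omega) hD1.1
    by_cases hD2 : δ = r+1 ∧ k = 0
    · obtain ⟨rfl, rfl⟩ := hD2
      have key : (r+1)*(2*r+1) + ((r+1)*(2*r+1) + s*(4*r+3) + 0*(2*r+2) + (r+1))
          = (r+1)*(2*r+1) + s*(4*r+3) + (r+1)*(2*r+2) := by ring
      refine ⟨(r+1)*(2*r+1), b, d, by omega, gB a b c d r s, ?_, hbd⟩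
      rw [key]; exact gd a b c d r s (r+1) (by omega) (by omega)
    · -- D4
      have hk1 : 1 ≤ k := by
        rcases Nat.eq_zero_or_pos k with rfl | h <;> omega
      have hj : δ + k ≤ 2*r+1 := by
        rcases Nat.lt_or_ge k (r+1) with h | h
        · omega
        · obtain rfl : k = r+1 := by omega
          have := hkr rfl; omega
      have key : (r+1-k)*(2*r+1) + ((r+1)*(2*r+1) + s*(4*r+3) + k*(2*r+2) + δ)
          = (r+1)*(2*r+1) + s*(4*r+3) + (r+1)*(2*r+2) + (δ+k-(r+1)) := by
        zify [show k ≤ r+1 from hk2, show r+1 ≤ δ+k from by omega]; ring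
      refine ⟨(r+1-k)*(2*r+1), a, b, by omega, ga a b c d r s (r+1-k) (by omega), ?_, hab⟩
      rw [key]; exact gb2 a b c d r s (δ+k-(r+1)) (by omega) (by omega)

end Wich

/-- For four distinct letters `a, b, c, d` and all `r, s ∈ ℕ`, the
Wichmann word `W(r,s) = a bʳ ⋄ʳ (a ⋄²ʳ)ʳ b (⋄⁴ʳ⁺²c)ˢ (⋄²ʳ⁺¹d)ʳ⁺¹ bʳ` over the alphabet
`{a,b,c,d}` is unbordered. -/
theorem wichmannWord_unbordered {A : Type*} (a b c d : A) (hab : a ≠ b) (hac : a ≠ c)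
    (had : a ≠ d) (hbc : b ≠ c) (hbd : b ≠ d) (hcd : c ≠ d) (r s : ℕ) :
    PartialWord.Unbordered
      (([some a] ++ List.replicate r (some b) ++ List.replicate r none ++
        listPow ([some a] ++ List.replicate (2 * r) none) r ++ [some b] ++
        listPow (List.replicate (4 * r + 2) none ++ [some c]) s ++
        listPow (List.replicate (2 * r + 1) none ++ [some d]) (r + 1) ++
        List.replicate r (some b) : List (Option A))) := by
  show PartialWord.Unbordered (Wich.WW a b c d r s)
  intro x y hpre hsuf hne hlt hlen hcomp
  obtain ⟨hleq, hag⟩ := hcomp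
  have hw := Wich.WW_len a b c d r s
  have hxlen : x.length ≤ (Wich.WW a b c d r s).length := hpre.length_le
  have hx0 : 0 < x.length := List.length_pos_iff.mpr hne
  obtain ⟨p, β, γ, hple, hβ, hγ, hbγ⟩ := Wich.core a b c d hab hac had hbc hbd hcd r s
    ((Wich.WW a b c d r s).length - x.length) (by omega) (by omega)
  have hpx : p < x.length := by omega
  have hxeq := List.prefix_iff_eq_take.mp hpre
  have hyeq := List.suffix_iff_eq_drop.mp hsuf
  have hxg : x.getD p none = some β := by
    conv_lhs => rw [hxeq]
    rw [Wich.getD_take _ _ _ hpx]; exact hβ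
  have hyg : y.getD p none = some γ := by
    conv_lhs => rw [hyeq]
    rw [Wich.getD_drop]
    rw [show (Wich.WW a b c d r s).length - y.length + p
        = p + ((Wich.WW a b c d r s).length - x.length) from by omega]
    exact hγ
  have hmem : p ∈ PartialWord.domain x ∩ PartialWord.domain y := by
    simp only [PartialWord.domain, Finset.mem_inter, Finset.mem_filter, Finset.mem_range]
    refine ⟨⟨hpx, ?_⟩, ⟨by omega, ?_⟩⟩
    · rw [hxg]; rfl
    · rw [hyg]; rfl
  have hxy := hag p hmem
  rw [hxg, hyg] at hxy
  exact hbγ (Option.some_injective _ hxy)
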